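/- arXiv:1412.6818 — 2 statements merged into one kernel-verified Lean document; each statement's English description precedes it below -/
import Mathlib

section
/- Let λ ∈ X and let v ∈ W be an element of minimal length ℓ(v) such that vλ is dominant. Then v t_λ is the unique element of minimal length in the set W t_λ = {u t_λ : u ∈ W} ⊂ W_aff; that is, ℓ(v t_λ) ≤ ℓ(u t_λ) for every u ∈ W, with equality only for u = v. -/
open scoped BigOperators

/-- The data of a finite reduced crystallographic root system `Φ`, with a chosen system of
positive roots `pos` cut out by a homomorphism `f : X → ℝ` not vanishing on any root, inside a
finitely generated free abelian group `X` (the weight lattice).  For each root `α` we record its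
coroot `coroot α : X →+ ℤ` and the associated reflection `s α : x ↦ x - ⟨x, α∨⟩ • α`, an
automorphism of `X`.  The reflections preserve `Φ` and the coroots are equivariant for them. -/
structure RootSystemData (X : Type*) [AddCommGroup X] [Module.Free ℤ X] [Module.Finite ℤ X] where
  /-- the (finite) set of roots -/
  Φ : Finset X
  /-- the set of positive roots -/
  pos : Finset X
  /-- the coroot attached to each root, as a homomorphism `X → ℤ` -/
  coroot : X → (X →+ ℤ)
  /-- the reflection attached to each root -/
  s : X → AddAut X
  /-- a homomorphism `X → ℝ` cutting out the positive roots -/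
  f : X →+ ℝ
  f_ne : ∀ α ∈ Φ, f α ≠ 0
  pos_def : ∀ α, α ∈ pos ↔ α ∈ Φ ∧ 0 < f α
  pairing_self : ∀ α ∈ Φ, coroot α α = 2
  s_apply : ∀ α ∈ Φ, ∀ x : X, s α x = x - coroot α x • α
  s_stable : ∀ α ∈ Φ, ∀ β ∈ Φ, s α β ∈ Φ
  reduced : ∀ α ∈ Φ, ∀ n : ℤ, n • α ∈ Φ → n = 1 ∨ n = -1
  coroot_equivariant : ∀ α ∈ Φ, ∀ β ∈ Φ, ∀ x : X, coroot (s α β) x = coroot β ((-(s α)) x)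

namespace RootSystemData

variable {X : Type*} [AddCommGroup X] [Module.Free ℤ X] [Module.Finite ℤ X] [DecidableEq X]
  (R : RootSystemData X)

/-- The Weyl group `W`, the subgroup of `Aut(X)` generated by the reflections `s_α`, `α ∈ Φ`. -/
def W : AddSubgroup (AddAut X) := AddSubgroup.closure (R.s '' ↑R.Φ)

/-- A weight `λ` is dominant if `⟨λ, α∨⟩ ≥ 0` for all positive roots `α`. -/
def IsDominant (lam : X) : Prop := ∀ α ∈ R.pos, 0 ≤ R.coroot α lam

/-- `ℓ(u) = #{α ∈ Φ⁺ : uα ∈ −Φ⁺}` for `u` in the (finite) Weyl group. -/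
def lenW (u : AddAut X) : ℕ := (R.pos.filter (fun α => -(u α) ∈ R.pos)).card

/-- The Iwahori–Matsumoto length of the element `u t_λ` of the extended affine Weyl group
`W_aff = W ⋉ X`:
`ℓ(u t_λ) = Σ_{α ∈ Φ⁺ ∩ u⁻¹(Φ⁺)} |⟨λ, α∨⟩| + Σ_{α ∈ Φ⁺ ∩ u⁻¹(−Φ⁺)} |1 + ⟨λ, α∨⟩|`. -/
def lenAff (u : AddAut X) (lam : X) : ℕ :=
  ∑ α ∈ R.pos.filter (fun α => u α ∈ R.pos), (R.coroot α lam).natAbs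
    + ∑ α ∈ R.pos.filter (fun α => -(u α) ∈ R.pos), (1 + R.coroot α lam).natAbs

/-- The length of the translation `t_λ`: `ℓ(t_λ) = Σ_{α ∈ Φ⁺} |⟨λ, α∨⟩|`. -/
def lenT (lam : X) : ℕ := ∑ α ∈ R.pos, (R.coroot α lam).natAbs

end RootSystemData
set_option linter.unusedSectionVars false
set_option maxHeartbeats 1000000

namespace RootSystemData

variable {X : Type*} [AddCommGroup X] [Module.Free ℤ X] [Module.Finite ℤ X] [DecidableEq X]
  (R : RootSystemData X) {α β γ : X}

lemma pos_sub : ∀ α ∈ R.pos, α ∈ R.Φ := fun α hα => ((R.pos_def α).1 hα).1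

lemma f_pos (hα : α ∈ R.pos) : 0 < R.f α := ((R.pos_def α).1 hα).2

lemma mem_pos_of (hα : α ∈ R.Φ) (hf : 0 < R.f α) : α ∈ R.pos := (R.pos_def α).2 ⟨hα, hf⟩

lemma zero_not_mem : (0 : X) ∉ R.Φ := fun h => R.f_ne 0 h (map_zero R.f)

lemma coroot_s_self (hα : α ∈ R.Φ) (x : X) :
    R.coroot α (R.s α x) = - R.coroot α x := by
  rw [R.s_apply α hα, map_sub, map_zsmul, R.pairing_self α hα, smul_eq_mul]; ring

lemma s_s (hα : α ∈ R.Φ) (x : X) : R.s α (R.s α x) = x := by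
  rw [R.s_apply α hα (R.s α x), R.coroot_s_self hα x, R.s_apply α hα x, neg_zsmul]
  abel

lemma s_mul_s (hα : α ∈ R.Φ) : R.s α + R.s α = 0 := by
  ext x
  simpa [AddAut.add_apply] using R.s_s hα x

lemma s_inv (hα : α ∈ R.Φ) : -(R.s α) = R.s α := by
  rw [neg_eq_iff_add_eq_zero]; exact R.s_mul_s hα

lemma s_self (hα : α ∈ R.Φ) : R.s α α = -α := by
  rw [R.s_apply α hα, R.pairing_self α hα]; abel

lemma neg_mem (hα : α ∈ R.Φ) : -α ∈ R.Φ := by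
  have := R.s_stable α hα α hα
  rwa [R.s_self hα] at this

lemma coroot_neg (hα : α ∈ R.Φ) (x : X) : R.coroot (-α) x = -R.coroot α x := by
  have h := R.coroot_equivariant α hα α hα x
  rw [R.s_self hα, R.s_inv hα, R.s_apply α hα x] at h
  rw [h, map_sub, map_zsmul, R.pairing_self α hα, smul_eq_mul]
  ring

lemma s_neg (hα : α ∈ R.Φ) : R.s (-α) = R.s α := by
  ext x
  rw [R.s_apply (-α) (R.neg_mem hα) x, R.s_apply α hα x, R.coroot_neg hα x]
  simp

lemma neg_mem_pos_iff (hα : α ∈ R.Φ) : -α ∈ R.pos ↔ α ∉ R.pos := by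
  have h1 := R.f_ne α hα
  constructor
  · intro h2 h3
    have hf2 := R.f_pos h2
    rw [map_neg] at hf2
    have := R.f_pos h3
    linarith
  · intro h2
    refine R.mem_pos_of (R.neg_mem hα) ?_
    rw [map_neg]
    rcases lt_or_gt_of_ne h1 with h | h
    · linarith
    · exact absurd (R.mem_pos_of hα h) h2

lemma mem_pos_of_not (hα : α ∈ R.Φ) (h : -α ∉ R.pos) : α ∈ R.pos := by
  by_contra h2
  exact h ((R.neg_mem_pos_iff hα).2 h2)

lemma not_mem_pos_of (hα : α ∈ R.Φ) (h : -α ∈ R.pos) : α ∉ R.pos :=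
  (R.neg_mem_pos_iff hα).1 h

lemma s_mem_W (hα : α ∈ R.Φ) : R.s α ∈ R.W :=
  AddSubgroup.subset_closure ⟨α, by simpa using hα⟩

lemma W_prop {w : AddAut X} (hw : w ∈ R.W) :
    ∀ α ∈ R.Φ, w α ∈ R.Φ ∧ ∀ x, R.coroot (w α) x = R.coroot α ((-w) x) := by
  induction hw using AddSubgroup.closure_induction with
  | mem g hg =>
    obtain ⟨β, hβ, rfl⟩ := hg
    intro α hα
    exact ⟨R.s_stable β hβ α hα, fun x => R.coroot_equivariant β hβ α hα x⟩
  | zero => exact fun α hα => ⟨hα, fun x => rfl⟩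
  | add w₁ w₂ h₁ h₂ ih₁ ih₂ =>
    intro α hα
    have m2 := ih₂ α hα
    have m1 := ih₁ (w₂ α) m2.1
    refine ⟨by simpa [AddAut.add_apply] using m1.1, fun x => ?_⟩
    rw [AddAut.add_apply, m1.2, m2.2]
    simp [AddAut.add_apply]
  | neg w hwmem ih =>
    intro α hα
    have hsurj := Finset.surj_on_of_inj_on_of_card_le (s := R.Φ) (t := R.Φ)
      (fun a _ => w a) (fun a ha => (ih a ha).1)
      (fun a₁ a₂ _ _ h => w.injective h) le_rfl
    obtain ⟨β, hβ, hβeq⟩ := hsurj α hα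
    have hβeq' : w β = α := hβeq.symm
    have hβ' : (-w) α = β := by
      apply w.injective
      simp [hβeq']
    refine ⟨by rw [hβ']; exact hβ, fun x => ?_⟩
    rw [hβ', neg_neg, ← hβeq', (ih β hβ).2 (w x)]
    simp

lemma W_mem_Φ {w : AddAut X} (hw : w ∈ R.W) (hα : α ∈ R.Φ) : w α ∈ R.Φ :=
  (R.W_prop hw α hα).1

lemma W_coroot {w : AddAut X} (hw : w ∈ R.W) (hα : α ∈ R.Φ) (x : X) :
    R.coroot (w α) x = R.coroot α ((-w) x) := (R.W_prop hw α hα).2 x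

lemma W_coroot_apply {w : AddAut X} (hw : w ∈ R.W) (hα : α ∈ R.Φ) (x : X) :
    R.coroot (w α) (w x) = R.coroot α x := by
  rw [R.W_coroot hw hα]
  simp

lemma conj1 (hα : α ∈ R.Φ) (hβ : β ∈ R.Φ) :
    R.s (R.s α β) = R.s α + R.s β + R.s α := by
  ext x
  have hm : R.s α β ∈ R.Φ := R.s_stable α hα β hβ
  rw [R.s_apply _ hm x, R.coroot_equivariant α hα β hβ x, R.s_inv hα]
  simp only [AddAut.add_apply]
  rw [R.s_apply β hβ (R.s α x), map_sub, map_zsmul, R.s_s hα x]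

end RootSystemData
namespace RootSystemData

variable {X : Type*} [AddCommGroup X] [Module.Free ℤ X] [Module.Finite ℤ X] [DecidableEq X]
  (R : RootSystemData X) {α β γ : X}

lemma lenW_mul_s_lt {w : AddAut X} (hw : w ∈ R.W) (hγ : γ ∈ R.pos)
    (hneg : -(w γ) ∈ R.pos) : R.lenW (w + R.s γ) < R.lenW w := by
  classical
  have hγΦ : γ ∈ R.Φ := R.pos_sub γ hγ
  have hsΦ : ∀ δ ∈ R.pos, R.s γ δ ∈ R.Φ := fun δ hδ => R.s_stable γ hγΦ δ (R.pos_sub δ hδ)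
  set N := R.pos.filter (fun δ => -(w δ) ∈ R.pos) with hN
  set S := R.pos.filter (fun δ => -(R.s γ δ) ∈ R.pos) with hS
  set A := R.pos.filter (fun δ => -(w (R.s γ δ)) ∈ R.pos) with hA
  set T := S.filter (fun δ => -(w δ) ∈ R.pos) with hT
  set U := S.filter (fun δ => -(w δ) ∉ R.pos) with hU
  -- lenW (w * s γ) = A.card
  have hlenA : R.lenW (w + R.s γ) = A.card := by
    unfold lenW
    congr 1
  have hlenN : R.lenW w = N.card := rfl
  -- split A and N
  have hAsplit := Finset.card_filter_add_card_filter_not (s := A) (fun δ => δ ∈ S)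
  have hNsplit := Finset.card_filter_add_card_filter_not (s := N) (fun δ => δ ∈ S)
  -- bijection 1 : A.filter(∉ S) ≃ N.filter(∉ S) via s γ
  have bij1 : (A.filter (fun δ => ¬ δ ∈ S)).card = (N.filter (fun δ => ¬ δ ∈ S)).card := by
    apply Finset.card_nbij' (fun δ => R.s γ δ) (fun δ => R.s γ δ)
    · intro δ hδ
      simp only [hA, hN, hS, Finset.mem_coe, Finset.mem_filter] at hδ ⊢
      obtain ⟨⟨hδp, hδw⟩, hδS⟩ := hδ
      push_neg at hδS
      have h1 : R.s γ δ ∈ R.pos := R.mem_pos_of_not (hsΦ δ hδp) (hδS hδp)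
      refine ⟨⟨h1, hδw⟩, ?_⟩
      intro ⟨_, hc⟩
      rw [R.s_s hγΦ δ] at hc
      exact (R.neg_mem_pos_iff (R.pos_sub δ hδp)).1 hc hδp
    · intro δ hδ
      simp only [hA, hN, hS, Finset.mem_coe, Finset.mem_filter] at hδ ⊢
      obtain ⟨⟨hδp, hδw⟩, hδS⟩ := hδ
      push_neg at hδS
      have h1 : R.s γ δ ∈ R.pos := R.mem_pos_of_not (hsΦ δ hδp) (hδS hδp)
      refine ⟨⟨h1, by rwa [R.s_s hγΦ δ]⟩, ?_⟩
      intro ⟨_, hc⟩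
      rw [R.s_s hγΦ δ] at hc
      exact (R.neg_mem_pos_iff (R.pos_sub δ hδp)).1 hc hδp
    · intro δ _; exact R.s_s hγΦ δ
    · intro δ _; exact R.s_s hγΦ δ
  -- bijection 2 : A.filter(∈ S) ≃ U via σ = -(s γ ·)
  have hσS : ∀ δ ∈ S, (-(R.s γ δ)) ∈ S := by
    intro δ hδ
    simp only [hS, Finset.mem_filter] at hδ ⊢
    refine ⟨hδ.2, ?_⟩
    rw [map_neg, R.s_s hγΦ δ, neg_neg]
    exact hδ.1
  have hσσ : ∀ δ : X, -(R.s γ (-(R.s γ δ))) = δ := by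
    intro δ
    rw [map_neg, R.s_s hγΦ δ, neg_neg]
  have bij2 : (A.filter (fun δ => δ ∈ S)).card = U.card := by
    apply Finset.card_nbij' (fun δ => -(R.s γ δ)) (fun δ => -(R.s γ δ))
    · intro δ hδ
      simp only [hA, hU, hS, Finset.mem_coe, Finset.mem_filter] at hδ ⊢
      obtain ⟨⟨hδp, hδw⟩, hδp2, hδS⟩ := hδ
      refine ⟨⟨hδS, by rw [map_neg, R.s_s hγΦ δ, neg_neg]; exact hδp⟩, ?_⟩
      rw [map_neg, neg_neg]
      exact R.not_mem_pos_of (R.W_mem_Φ hw (hsΦ δ hδp)) hδw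
    · intro δ hδ
      simp only [hA, hU, hS, Finset.mem_coe, Finset.mem_filter] at hδ ⊢
      obtain ⟨⟨hδp, hδS⟩, hδw⟩ := hδ
      have hwδ : w δ ∈ R.pos := R.mem_pos_of_not (R.W_mem_Φ hw (R.pos_sub δ hδp)) hδw
      refine ⟨⟨hδS, ?_⟩, hδS, by rw [map_neg, R.s_s hγΦ δ, neg_neg]; exact hδp⟩
      rw [map_neg, R.s_s hγΦ δ, map_neg, neg_neg]
      exact hwδ
    · intro δ _; exact hσσ δ
    · intro δ _; exact hσσ δ
  -- N.filter(∈ S) = T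
  have h3 : (N.filter (fun δ => δ ∈ S)).card = T.card := by
    congr 1
    ext δ
    simp only [hN, hT, hS, Finset.mem_filter]
    tauto
  -- γ ∈ T
  have hγS : γ ∈ S := by
    simp only [hS, Finset.mem_filter]
    exact ⟨hγ, by rw [R.s_self hγΦ, neg_neg]; exact hγ⟩
  have hγT : γ ∈ T := by
    simp only [hT, Finset.mem_filter]
    exact ⟨hγS, hneg⟩
  -- injection U → T.erase γ
  have hinj : U.card ≤ (T.erase γ).card := by
    apply Finset.card_le_card_of_injOn (fun δ => -(R.s γ δ))
    · intro δ hδ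
      simp only [hU, hS, Finset.mem_coe, Finset.mem_filter] at hδ
      obtain ⟨⟨hδp, hδS⟩, hδw⟩ := hδ
      have hwδ : w δ ∈ R.pos := R.mem_pos_of_not (R.W_mem_Φ hw (R.pos_sub δ hδp)) hδw
      have hne : -(R.s γ δ) ≠ γ := by
        intro hc
        have : δ = γ := by
          have := congrArg (fun y => -(R.s γ y)) hc
          rw [hσσ δ] at this
          rw [this, R.s_self hγΦ, neg_neg]
        rw [this] at hδw
        exact hδw hneg
      rw [Finset.mem_coe, Finset.mem_erase]
      refine ⟨hne, ?_⟩
      simp only [hT, Finset.mem_filter]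
      have hδSmem : δ ∈ S := by
        simp only [hS, Finset.mem_filter]
        exact ⟨hδp, hδS⟩
      refine ⟨hσS δ hδSmem, ?_⟩
      -- the f-computation
      have hc : -(R.s γ δ) = R.coroot γ δ • γ - δ := by
        rw [R.s_apply γ hγΦ δ]; abel
      have hσp : -(R.s γ δ) ∈ R.pos := hδS
      have hfσ : (0:ℝ) < R.f (-(R.s γ δ)) := R.f_pos hσp
      have hfδ : (0:ℝ) < R.f δ := R.f_pos hδp
      have hfγ : (0:ℝ) < R.f γ := R.f_pos hγ
      have hfwδ : (0:ℝ) < R.f (w δ) := R.f_pos hwδ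
      have hfwγ : R.f (w γ) < 0 := by
        have := R.f_pos hneg
        rw [map_neg] at this; linarith
      set c : ℤ := R.coroot γ δ with hcdef
      have hfc : R.f (-(R.s γ δ)) = (c:ℝ) * R.f γ - R.f δ := by
        rw [hc, map_sub, map_zsmul, zsmul_eq_mul]
      have h0 : (0:ℝ) < (c:ℝ) * R.f γ - R.f δ := by rw [← hfc]; exact hfσ
      have hc1 : 1 ≤ c := by
        have hcr : (0:ℝ) < (c:ℝ) := by nlinarith
        have : (0:ℤ) < c := by exact_mod_cast hcr
        omega
      have hcpos : (1:ℝ) ≤ (c:ℝ) := by exact_mod_cast hc1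
      have hwσ : w (-(R.s γ δ)) = c • (w γ) - w δ := by
        rw [hc, map_sub, map_zsmul]
      have hfwσ : R.f (w (-(R.s γ δ))) < 0 := by
        rw [hwσ, map_sub, map_zsmul, zsmul_eq_mul]
        have h5 : (c:ℝ) * R.f (w γ) ≤ 1 * R.f (w γ) :=
          mul_le_mul_of_nonpos_right hcpos (le_of_lt hfwγ)
        linarith
      have hmem : w (-(R.s γ δ)) ∈ R.Φ := R.W_mem_Φ hw (R.pos_sub _ hσp)
      refine R.mem_pos_of (R.neg_mem hmem) ?_
      rw [map_neg]; linarith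
    · intro δ₁ h₁ δ₂ h₂ he
      simp only at he
      have := congrArg (fun y => -(R.s γ y)) he
      rwa [hσσ δ₁, hσσ δ₂] at this
  have herase : (T.erase γ).card < T.card := Finset.card_erase_lt_of_mem hγT
  omega

end RootSystemData
namespace RootSystemData

variable {X : Type*} [AddCommGroup X] [Module.Free ℤ X] [Module.Finite ℤ X] [DecidableEq X]
  (R : RootSystemData X) {α β γ : X}

/-- An auxiliary `W`-invariant symmetric bilinear form. -/
def Bf (x y : X) : ℤ := ∑ γ ∈ R.Φ, R.coroot γ x * R.coroot γ y

lemma Bf_comm (x y : X) : R.Bf x y = R.Bf y x := by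
  unfold Bf; exact Finset.sum_congr rfl fun γ _ => mul_comm _ _

lemma Bf_add_right (x y z : X) : R.Bf x (y + z) = R.Bf x y + R.Bf x z := by
  unfold Bf
  rw [← Finset.sum_add_distrib]
  exact Finset.sum_congr rfl fun γ _ => by rw [map_add]; ring

lemma Bf_smul_right (x : X) (n : ℤ) (y : X) : R.Bf x (n • y) = n * R.Bf x y := by
  unfold Bf
  rw [Finset.mul_sum]
  exact Finset.sum_congr rfl fun γ _ => by rw [map_zsmul, smul_eq_mul]; ring

lemma Bf_neg_right (x y : X) : R.Bf x (-y) = - R.Bf x y := by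
  have := R.Bf_smul_right x (-1) y
  simpa using this

lemma Bf_sub_right (x y z : X) : R.Bf x (y - z) = R.Bf x y - R.Bf x z := by
  rw [sub_eq_add_neg, R.Bf_add_right, R.Bf_neg_right]; ring

lemma Bf_add_left (x y z : X) : R.Bf (x + y) z = R.Bf x z + R.Bf y z := by
  rw [R.Bf_comm, R.Bf_add_right, R.Bf_comm z x, R.Bf_comm z y]

lemma Bf_smul_left (n : ℤ) (x y : X) : R.Bf (n • x) y = n * R.Bf x y := by
  rw [R.Bf_comm, R.Bf_smul_right, R.Bf_comm]

lemma Bf_sub_left (x y z : X) : R.Bf (x - y) z = R.Bf x z - R.Bf y z := by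
  rw [R.Bf_comm, R.Bf_sub_right, R.Bf_comm z x, R.Bf_comm z y]

lemma Bf_self_nonneg (x : X) : 0 ≤ R.Bf x x :=
  Finset.sum_nonneg fun γ _ => mul_self_nonneg _

lemma Bf_self_pos (hα : α ∈ R.Φ) : 0 < R.Bf α α := by
  have h := Finset.single_le_sum (f := fun γ => R.coroot γ α * R.coroot γ α)
    (fun γ _ => mul_self_nonneg _) hα
  simp only [R.pairing_self α hα] at h
  unfold Bf
  linarith

lemma Bf_s_invariant (hβ : β ∈ R.Φ) (x y : X) :
    R.Bf (R.s β x) (R.s β y) = R.Bf x y := by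
  unfold Bf
  apply Finset.sum_nbij' (fun γ => R.s β γ) (fun γ => R.s β γ)
  · intro γ hγ; exact R.s_stable β hβ γ hγ
  · intro γ hγ; exact R.s_stable β hβ γ hγ
  · intro γ _; exact R.s_s hβ γ
  · intro γ _; exact R.s_s hβ γ
  · intro γ hγ
    rw [R.coroot_equivariant β hβ γ hγ x, R.coroot_equivariant β hβ γ hγ y, R.s_inv hβ]

lemma Bf_key (hβ : β ∈ R.Φ) (x : X) : 2 * R.Bf x β = R.coroot β x * R.Bf β β := by
  have h1 : R.Bf (R.s β x) β = - R.Bf x β := by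
    have h2 : R.Bf (R.s β x) (R.s β β) = R.Bf x β := R.Bf_s_invariant hβ x β
    rw [R.s_self hβ, R.Bf_neg_right] at h2
    linarith
  rw [R.s_apply β hβ x, R.Bf_sub_left, R.Bf_smul_left] at h1
  linarith

lemma rad_no_root (r : X) (hr : r ≠ 0) (hrad : ∀ γ ∈ R.Φ, R.coroot γ r = 0)
    (hθ : θ ∈ R.Φ) (h0 : r - θ ∈ R.Φ) : False := by
  have key : ∀ k : ℕ, ((2:ℤ)^k) • r - θ ∈ R.Φ := by
    intro k
    induction k with
    | zero => simpa using h0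
    | succ k ih =>
      set μ := ((2:ℤ)^k) • r - θ with hμ
      have hμΦ : μ ∈ R.Φ := ih
      have hcθ : R.coroot μ θ = -2 := by
        have hθeq : θ = ((2:ℤ)^k) • r - μ := by rw [hμ]; abel
        rw [hθeq, map_sub, map_zsmul, hrad μ hμΦ, R.pairing_self μ hμΦ]
        simp
      have := R.s_stable μ hμΦ θ hθ
      rw [R.s_apply μ hμΦ θ, hcθ] at this
      have heq : θ - (-2 : ℤ) • μ = ((2:ℤ)^(k+1)) • r - θ := by
        have h2 : ((2:ℤ)^(k+1)) = 2 * 2^k := by ring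
        rw [hμ, h2, mul_smul, neg_smul, sub_neg_eq_add, smul_sub]
        abel
      rwa [heq] at this
  -- injectivity gives infinitely many roots
  have hinj : Function.Injective (fun k : ℕ => ((2:ℤ)^k) • r - θ) := by
    intro j k hjk
    simp only [sub_left_inj] at hjk
    have : ((2:ℤ)^j - (2:ℤ)^k) • r = 0 := by
      rw [sub_smul, hjk, sub_self]
    have h2 : ((2:ℤ)^j - (2:ℤ)^k) = 0 := by
      rcases smul_eq_zero.1 this with h | h
      · exact h
      · exact absurd h hr
    have : ((2:ℤ)^j) = (2:ℤ)^k := by linarith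
    exact Nat.pow_right_injective (le_refl 2) (by exact_mod_cast this)
  have hsub : Set.range (fun k : ℕ => ((2:ℤ)^k) • r - θ) ⊆ (R.Φ : Set X) := by
    rintro x ⟨k, rfl⟩
    exact key k
  exact (Set.infinite_range_of_injective hinj) (Set.Finite.subset R.Φ.finite_toSet hsub)

lemma sub_mem (hα : α ∈ R.Φ) (hβ : β ∈ R.Φ) (hne : α ≠ β)
    (hq : 0 < R.coroot β α) : α - β ∈ R.Φ := by
  set p := R.coroot β α with hp
  set q := R.coroot α β with hqdef
  have hBββ := R.Bf_self_pos hβ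
  have hBαα := R.Bf_self_pos hα
  have k1 : 2 * R.Bf α β = p * R.Bf β β := R.Bf_key hβ α
  have k2 : 2 * R.Bf β α = q * R.Bf α α := R.Bf_key hα β
  rw [R.Bf_comm β α] at k2
  have hBαβ : 0 < R.Bf α β := by nlinarith [mul_pos hq hBββ]
  have hq1 : 0 < q := by nlinarith
  have hp1le : 1 ≤ p := hq
  have hq1le : 1 ≤ q := hq1
  rcases eq_or_lt_of_le hp1le with hp1 | hp2
  · -- p = 1
    have := R.s_stable β hβ α hα
    rw [R.s_apply β hβ α, ← hp, ← hp1, one_smul] at this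
    exact this
  · rcases eq_or_lt_of_le hq1le with hq1' | hq2
    · -- q = 1
      have := R.s_stable α hα β hβ
      rw [R.s_apply α hα β, ← hqdef, ← hq1', one_smul] at this
      have h2 := R.neg_mem this
      rwa [neg_sub] at h2
    · -- p ≥ 2, q ≥ 2 : derive p = q = 2 and contradiction
      exfalso
      -- Cauchy-Schwarz
      have hCS : R.Bf α β * R.Bf α β ≤ R.Bf α α * R.Bf β β := by
        have hv := R.Bf_self_nonneg ((R.Bf α α) • β - (R.Bf α β) • α)
        simp only [R.Bf_sub_left, R.Bf_sub_right, R.Bf_smul_left, R.Bf_smul_right,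
          R.Bf_comm β α] at hv
        nlinarith
      have e : (p * R.Bf β β) * (q * R.Bf α α) = 4 * (R.Bf α β * R.Bf α β) := by
        rw [← k1, ← k2]; ring
      have hpq4 : p * q ≤ 4 := by nlinarith [mul_pos hBαα hBββ, hCS, e]
      have hp2a : 2 ≤ p := hp2
      have hq2a : 2 ≤ q := hq2
      have h6 : p * 2 ≤ p * q := mul_le_mul_of_nonneg_left hq2a (by linarith)
      have h7 : 2 * q ≤ p * q := mul_le_mul_of_nonneg_right hp2a (by linarith)
      have hp2' : p = 2 := by linarith
      have hq2' : q = 2 := by linarith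
      have hBeq1 : R.Bf α β = R.Bf β β := by rw [hp2'] at k1; linarith
      have hBeq2 : R.Bf α β = R.Bf α α := by rw [hq2'] at k2; linarith
      -- r := α - β is radical
      set r := α - β with hrdef
      have hBrr : R.Bf r r = 0 := by
        rw [hrdef, R.Bf_sub_left, R.Bf_sub_right, R.Bf_sub_right, R.Bf_comm β α]
        omega
      have hrad : ∀ γ ∈ R.Φ, R.coroot γ r = 0 := by
        intro γ hγ
        have hsum : ∑ δ ∈ R.Φ, R.coroot δ r * R.coroot δ r = 0 := hBrr
        have := (Finset.sum_eq_zero_iff_of_nonneg (fun δ _ => mul_self_nonneg (R.coroot δ r))).1 hsum γ hγ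
        nlinarith [this]
      have hrne : r ≠ 0 := sub_ne_zero.2 hne
      -- seed : s_β α = α - 2 β = r - β
      have hseed : r - β ∈ R.Φ := by
        have := R.s_stable β hβ α hα
        rw [R.s_apply β hβ α, ← hp, hp2'] at this
        have heq : α - (2:ℤ) • β = r - β := by
          rw [hrdef, two_zsmul]; abel
        rwa [heq] at this
      exact R.rad_no_root r hrne hrad hβ hseed

end RootSystemData
namespace RootSystemData

variable {X : Type*} [AddCommGroup X] [Module.Free ℤ X] [Module.Finite ℤ X] [DecidableEq X]
  (R : RootSystemData X) {α β γ θ : X}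

/-- A simple (indecomposable) positive root. -/
def IsSimpleRoot (α : X) : Prop :=
  α ∈ R.pos ∧ ∀ β ∈ R.pos, ∀ γ ∈ R.pos, α ≠ β + γ

lemma no_bad (hs : R.IsSimpleRoot α) :
    ∀ n : ℕ, ∀ γ δ : X, γ ∈ R.pos → δ ∈ R.pos → γ ≠ α → γ + δ = (n:ℤ) • α →
      R.coroot α γ = n → False := by
  have hαp : α ∈ R.pos := hs.1
  have hαΦ : α ∈ R.Φ := R.pos_sub α hαp
  intro n
  induction n using Nat.strong_induction_on with
  | _ n IH =>
  intro γ δ hγ hδ hγα hsum hpair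
  have hγΦ : γ ∈ R.Φ := R.pos_sub γ hγ
  have hδΦ : δ ∈ R.Φ := R.pos_sub δ hδ
  have hfγ := R.f_pos hγ
  have hfδ := R.f_pos hδ
  have hfα := R.f_pos hαp
  have hn1 : 1 ≤ n := by
    by_contra hcon
    have hn0 : n = 0 := by omega
    rw [hn0] at hsum
    simp only [Nat.cast_zero, zero_smul] at hsum
    have : R.f (γ + δ) = 0 := by rw [hsum, map_zero]
    rw [map_add] at this
    linarith
  rcases eq_or_lt_of_le hn1 with h1 | h2
  · -- n = 1
    apply hs.2 γ hγ δ hδ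
    rw [hsum, ← h1]
    simp
  · -- n ≥ 2
    have hn2 : 2 ≤ n := h2
    have hδα : δ ≠ α := by
      intro he
      have hγeq : γ = ((n:ℤ) - 1) • α := by
        rw [sub_smul, one_smul, ← hsum, he]; abel
      have := R.reduced α hαΦ ((n:ℤ) - 1) (by rw [← hγeq]; exact hγΦ)
      rcases this with h | h
      · apply hγα
        rw [hγeq, h, one_smul]
      · omega
    have htot : R.coroot α γ + R.coroot α δ = (n:ℤ) * 2 := by
      rw [← map_add, hsum, map_zsmul, R.pairing_self α hαΦ, smul_eq_mul]
    have hpairδ : R.coroot α δ = n := by omega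
    have hγsub : γ - α ∈ R.Φ :=
      R.sub_mem hγΦ hαΦ hγα (by rw [hpair]; exact_mod_cast (by omega : 0 < n))
    have hδsub : δ - α ∈ R.Φ :=
      R.sub_mem hδΦ hαΦ hδα (by rw [hpairδ]; exact_mod_cast (by omega : 0 < n))
    by_cases hb1 : R.f (γ - α) < 0
    · have hm : α - γ ∈ R.pos := by
        refine R.mem_pos_of (by have := R.neg_mem hγsub; rwa [neg_sub] at this) ?_
        rw [map_sub]
        rw [map_sub] at hb1
        linarith
      exact hs.2 γ hγ (α - γ) hm (by abel)
    by_cases hb2 : R.f (δ - α) < 0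
    · have hm : α - δ ∈ R.pos := by
        refine R.mem_pos_of (by have := R.neg_mem hδsub; rwa [neg_sub] at this) ?_
        rw [map_sub]
        rw [map_sub] at hb2
        linarith
      exact hs.2 δ hδ (α - δ) hm (by abel)
    push_neg at hb1 hb2
    have hp1 : γ - α ∈ R.pos :=
      R.mem_pos_of hγsub (lt_of_le_of_ne hb1 (Ne.symm (R.f_ne _ hγsub)))
    have hp2 : δ - α ∈ R.pos :=
      R.mem_pos_of hδsub (lt_of_le_of_ne hb2 (Ne.symm (R.f_ne _ hδsub)))
    by_cases hn2' : n = 2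
    · have hzero : (γ - α) + (δ - α) = 0 := by
        have : (γ - α) + (δ - α) = γ + δ - (2:ℤ) • α := by
          rw [two_zsmul]; abel
        rw [this, hsum, hn2']
        norm_num
      have := R.f_pos hp1
      have := R.f_pos hp2
      have hf0 : R.f ((γ - α) + (δ - α)) = 0 := by rw [hzero, map_zero]
      rw [map_add] at hf0
      linarith
    · apply IH (n - 2) (by omega) (γ - α) (δ - α) hp1 hp2
      · intro he
        have : γ = (2:ℤ) • α := by
          rw [two_zsmul]; exact eq_add_of_sub_eq he
        rcases R.reduced α hαΦ 2 (by rw [← this]; exact hγΦ) with h | h <;> omega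
      · have hcast : ((n - 2 : ℕ) : ℤ) = (n:ℤ) - 2 := by omega
        rw [hcast, sub_smul, two_zsmul, ← hsum]
        abel
      · rw [map_sub, hpair, R.pairing_self α hαΦ]
        omega
    
lemma s_simple_pos (hs : R.IsSimpleRoot α) (hγ : γ ∈ R.pos) (hne : γ ≠ α) :
    R.s α γ ∈ R.pos := by
  have hαp : α ∈ R.pos := hs.1
  have hαΦ : α ∈ R.Φ := R.pos_sub α hαp
  have hγΦ : γ ∈ R.Φ := R.pos_sub γ hγ
  have hmem : R.s α γ ∈ R.Φ := R.s_stable α hαΦ γ hγΦ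
  by_cases hf : 0 < R.f (R.s α γ)
  · exact R.mem_pos_of hmem hf
  · exfalso
    have hfneg : R.f (R.s α γ) < 0 :=
      lt_of_le_of_ne (not_lt.1 hf) (R.f_ne _ hmem)
    set c := R.coroot α γ with hc
    have hδmem : c • α - γ ∈ R.Φ := by
      have := R.neg_mem hmem
      rw [R.s_apply α hαΦ γ, neg_sub] at this
      exact this
    have hfs : R.f (R.s α γ) = R.f γ - (c:ℝ) * R.f α := by
      rw [R.s_apply α hαΦ γ, map_sub, map_zsmul, zsmul_eq_mul]
    have hδ : c • α - γ ∈ R.pos := by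
      refine R.mem_pos_of hδmem ?_
      rw [map_sub, map_zsmul, zsmul_eq_mul]
      rw [hfs] at hfneg
      linarith
    have hfγ := R.f_pos hγ
    have hfα := R.f_pos hαp
    have hc1 : 1 ≤ c := by
      rw [hfs] at hfneg
      have : (0:ℝ) < (c:ℝ) := by nlinarith
      exact_mod_cast (by exact_mod_cast this : (0:ℤ) < c)
    apply R.no_bad hs c.toNat γ (c • α - γ) hγ hδ hne
    · rw [Int.toNat_of_nonneg (by omega)]
      abel
    · rw [Int.toNat_of_nonneg (by omega), ← hc]

lemma decomp : ∀ γ ∈ R.pos, ∃ l : List X,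
    l ≠ [] ∧ (∀ α ∈ l, R.IsSimpleRoot α) ∧ γ = l.sum := by
  classical
  suffices H : ∀ n : ℕ, ∀ γ, γ ∈ R.pos →
      (R.pos.filter (fun β => R.f β < R.f γ)).card = n →
      ∃ l : List X, l ≠ [] ∧ (∀ α ∈ l, R.IsSimpleRoot α) ∧ γ = l.sum by
    exact fun γ hγ => H _ γ hγ rfl
  intro n
  induction n using Nat.strong_induction_on with
  | _ n IH =>
  intro γ hγ hn
  by_cases hsimp : R.IsSimpleRoot γ
  · exact ⟨[γ], by simp, by simpa using hsimp, by simp⟩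
  · have hdec : ∃ β ∈ R.pos, ∃ δ ∈ R.pos, γ = β + δ := by
      unfold IsSimpleRoot at hsimp
      push_neg at hsimp
      exact hsimp hγ
    obtain ⟨b, hb, d, hd, rfl⟩ := hdec
    have hfb := R.f_pos hb
    have hfd := R.f_pos hd
    have hfsum : R.f (b + d) = R.f b + R.f d := map_add _ _ _
    have hmono : ∀ x : X, R.f b ≤ R.f x ∨ R.f d ≤ R.f x → True := fun _ _ => trivial
    have hlt : ∀ (c : X), c ∈ R.pos → R.f c < R.f (b + d) →
        (R.pos.filter (fun β => R.f β < R.f c)).card < n := by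
      intro c hc hfc
      rw [← hn]
      apply Finset.card_lt_card
      rw [Finset.ssubset_iff_of_subset
        (Finset.monotone_filter_right _ (fun x _ h => lt_trans h hfc))]
      refine ⟨c, Finset.mem_filter.2 ⟨hc, hfc⟩, ?_⟩
      simp only [Finset.mem_filter, not_and]
      exact fun _ => lt_irrefl _
    obtain ⟨lb, _, hlbs, hlbsum⟩ := IH _ (hlt b hb (by rw [hfsum]; linarith)) b hb rfl
    obtain ⟨ld, _, hlds, hldsum⟩ := IH _ (hlt d hd (by rw [hfsum]; linarith)) d hd rfl
    refine ⟨lb ++ ld, ?_, ?_, ?_⟩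
    · intro hcon
      rcases List.append_eq_nil_iff.1 hcon with ⟨h1, _⟩
      exact ‹lb ≠ []› h1
    · intro x hx
      rcases List.mem_append.1 hx with h | h
      · exact hlbs x h
      · exact hlds x h
    · rw [List.sum_append, ← hlbsum, ← hldsum]

lemma Bf_list_sum (x : X) : ∀ l : List X, R.Bf x l.sum = (l.map (fun y => R.Bf x y)).sum := by
  intro l
  induction l with
  | nil => simp [show R.Bf x 0 = 0 by unfold Bf; simp]
  | cons a t ih => simp [List.sum_cons, R.Bf_add_right, ih]

lemma list_sum_pos : ∀ l : List ℤ, 0 < l.sum → ∃ a ∈ l, 0 < a := by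
  intro l
  induction l with
  | nil => simp
  | cons a t ih =>
    intro h
    rw [List.sum_cons] at h
    by_cases ha : 0 < a
    · exact ⟨a, List.mem_cons_self, ha⟩
    · obtain ⟨b, hb, hbp⟩ := ih (by push_neg at ha; linarith)
      exact ⟨b, List.mem_cons_of_mem _ hb, hbp⟩

lemma exists_simple_pairing_pos (hγ : γ ∈ R.pos) :
    ∃ α, R.IsSimpleRoot α ∧ 0 < R.coroot α γ := by
  obtain ⟨l, hlne, hls, hsum⟩ := R.decomp γ hγ
  have hpos : 0 < R.Bf γ γ := R.Bf_self_pos (R.pos_sub γ hγ)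
  have hBl : R.Bf γ γ = (l.map (fun y => R.Bf γ y)).sum := by
    conv_lhs => rw [hsum]
    rw [← R.Bf_list_sum]
    rw [← hsum]
  rw [hBl] at hpos
  obtain ⟨a, ha, hap⟩ := list_sum_pos _ hpos
  obtain ⟨α, hαl, rfl⟩ := List.mem_map.1 ha
  have hsα := hls α hαl
  have hαΦ : α ∈ R.Φ := R.pos_sub α hsα.1
  have hkey := R.Bf_key hαΦ γ
  have hBαα := R.Bf_self_pos hαΦ
  refine ⟨α, hsα, ?_⟩
  nlinarith

lemma word_mem_W (l : List X) (hl : ∀ α ∈ l, α ∈ R.Φ) : (l.map R.s).sum ∈ R.W := by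
  apply list_sum_mem
  intro x hx
  obtain ⟨α, hα, rfl⟩ := List.mem_map.1 hx
  exact R.s_mem_W (hl α hα)

lemma word_conj : ∀ l : List X, (∀ α ∈ l, α ∈ R.Φ) → ∀ θ ∈ R.Φ,
    R.s (((l.map R.s).sum) θ) = (l.map R.s).sum + R.s θ + -((l.map R.s).sum) := by
  intro l
  induction l with
  | nil => intro _ θ hθ; simp
  | cons a t ih =>
    intro hmem θ hθ
    have haΦ : a ∈ R.Φ := hmem a (List.mem_cons_self)
    have htmem : ∀ α ∈ t, α ∈ R.Φ := fun α hα => hmem α (List.mem_cons_of_mem _ hα)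
    have hθ' : ((t.map R.s).sum) θ ∈ R.Φ := R.W_mem_Φ (R.word_mem_W t htmem) hθ
    simp only [List.map_cons, List.sum_cons]
    rw [AddAut.add_apply, R.conj1 haΦ hθ', ih htmem θ hθ, neg_add_rev, R.s_inv haΦ]
    simp only [add_assoc]

lemma word_inv : ∀ l : List X, (∀ α ∈ l, α ∈ R.Φ) →
    -((l.map R.s).sum) = ((l.reverse.map R.s).sum) := by
  intro l
  induction l with
  | nil => simp
  | cons a t ih =>
    intro hmem
    have haΦ : a ∈ R.Φ := hmem a (List.mem_cons_self)
    have htmem : ∀ α ∈ t, α ∈ R.Φ := fun α hα => hmem α (List.mem_cons_of_mem _ hα)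
    simp only [List.map_cons, List.sum_cons, List.reverse_cons, List.map_append,
      List.sum_append, neg_add_rev, ih htmem]
    simp [R.s_inv haΦ]

lemma gen_s : ∀ γ ∈ R.pos, ∃ l : List X,
    (∀ α ∈ l, R.IsSimpleRoot α) ∧ R.s γ = (l.map R.s).sum := by
  classical
  suffices H : ∀ n : ℕ, ∀ γ, γ ∈ R.pos →
      (R.pos.filter (fun β => R.f β < R.f γ)).card = n →
      ∃ l : List X, (∀ α ∈ l, R.IsSimpleRoot α) ∧ R.s γ = (l.map R.s).sum by
    exact fun γ hγ => H _ γ hγ rfl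
  intro n
  induction n using Nat.strong_induction_on with
  | _ n IH =>
  intro γ hγ hn
  by_cases hsimp : R.IsSimpleRoot γ
  · exact ⟨[γ], by simpa using hsimp, by simp⟩
  · obtain ⟨α, hαs, hc⟩ := R.exists_simple_pairing_pos hγ
    have hne : γ ≠ α := fun h => hsimp (h ▸ hαs)
    have hαΦ : α ∈ R.Φ := R.pos_sub α hαs.1
    have hγΦ : γ ∈ R.Φ := R.pos_sub γ hγ
    have hγ' : R.s α γ ∈ R.pos := R.s_simple_pos hαs hγ hne
    have hγ'Φ : R.s α γ ∈ R.Φ := R.pos_sub _ hγ'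
    have hflt : R.f (R.s α γ) < R.f γ := by
      rw [R.s_apply α hαΦ γ, map_sub, map_zsmul, zsmul_eq_mul]
      have hfα := R.f_pos hαs.1
      have : (1:ℝ) ≤ (R.coroot α γ : ℝ) := by exact_mod_cast hc
      nlinarith
    have hmlt : (R.pos.filter (fun β => R.f β < R.f (R.s α γ))).card < n := by
      rw [← hn]
      apply Finset.card_lt_card
      rw [Finset.ssubset_iff_of_subset
        (Finset.monotone_filter_right _ (fun x _ h => lt_trans h hflt))]
      refine ⟨R.s α γ, Finset.mem_filter.2 ⟨hγ', hflt⟩, ?_⟩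
      simp only [Finset.mem_filter, not_and]
      exact fun _ => lt_irrefl _
    obtain ⟨l', hl's, hl'eq⟩ := IH _ hmlt (R.s α γ) hγ' rfl
    refine ⟨α :: (l' ++ [α]), ?_, ?_⟩
    · intro x hx
      rcases List.mem_cons.1 hx with rfl | hx
      · exact hαs
      · rcases List.mem_append.1 hx with h | h
        · exact hl's x h
        · rcases List.mem_singleton.1 h with rfl
          exact hαs
    · have hre : γ = R.s α (R.s α γ) := (R.s_s hαΦ γ).symm
      rw [show R.s γ = R.s (R.s α (R.s α γ)) by rw [← hre]]
      rw [R.conj1 hαΦ hγ'Φ]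
      simp only [List.map_cons, List.sum_cons, List.map_append, List.sum_append,
        List.map_nil, List.sum_nil]
      rw [hl'eq]
      simp only [add_assoc, add_zero]

lemma gen_W {w : AddAut X} (hw : w ∈ R.W) : ∃ l : List X,
    (∀ α ∈ l, R.IsSimpleRoot α) ∧ w = (l.map R.s).sum := by
  induction hw using AddSubgroup.closure_induction with
  | mem g hg =>
    obtain ⟨β, hβm, rfl⟩ := hg
    have hβ : β ∈ R.Φ := by simpa using hβm
    by_cases hβp : β ∈ R.pos
    · exact R.gen_s β hβp
    · have hnegp : -β ∈ R.pos := (R.neg_mem_pos_iff hβ).2 hβp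
      obtain ⟨l, hl, heq⟩ := R.gen_s (-β) hnegp
      exact ⟨l, hl, by rw [← R.s_neg hβ]; exact heq⟩
  | zero => exact ⟨[], by simp, by simp⟩
  | add x y hx hy ihx ihy =>
    obtain ⟨lx, hlx, rfl⟩ := ihx
    obtain ⟨ly, hly, rfl⟩ := ihy
    refine ⟨lx ++ ly, ?_, by simp [List.map_append, List.sum_append]⟩
    intro α hα
    rcases List.mem_append.1 hα with h | h
    · exact hlx α h
    · exact hly α h
  | neg x hx ih =>
    obtain ⟨l, hl, rfl⟩ := ih
    refine ⟨l.reverse, fun α hα => hl α (List.mem_reverse.1 hα), ?_⟩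
    exact R.word_inv l (fun α hα => R.pos_sub α (hl α hα).1)

lemma flip : ∀ l : List X, (∀ α ∈ l, R.IsSimpleRoot α) → ∀ θ, θ ∈ R.pos →
    -(((l.map R.s).sum) θ) ∈ R.pos →
    ∃ l' : List X, (∀ α ∈ l', α ∈ l) ∧ l'.length + 1 = l.length ∧
      (l.map R.s).sum + R.s θ = (l'.map R.s).sum := by
  intro l
  induction l with
  | nil =>
    intro _ θ hθ hcon
    exfalso
    simp only [List.map_nil, List.sum_nil] at hcon
    have : -θ ∈ R.pos := by simpa using hcon
    exact (R.neg_mem_pos_iff (R.pos_sub θ hθ)).1 this hθ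
  | cons a t ih =>
    intro hmem θ hθ hneg
    have haS : R.IsSimpleRoot a := hmem a (List.mem_cons_self)
    have haΦ : a ∈ R.Φ := R.pos_sub a haS.1
    have hts : ∀ α ∈ t, R.IsSimpleRoot α := fun α hα => hmem α (List.mem_cons_of_mem _ hα)
    have htΦ : ∀ α ∈ t, α ∈ R.Φ := fun α hα => R.pos_sub α (hts α hα).1
    have hpθΦ : ((t.map R.s).sum) θ ∈ R.Φ :=
      R.W_mem_Φ (R.word_mem_W t htΦ) (R.pos_sub θ hθ)
    simp only [List.map_cons, List.sum_cons] at hneg ⊢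
    rw [AddAut.add_apply] at hneg
    by_cases hcase : -(((t.map R.s).sum) θ) ∈ R.pos
    · obtain ⟨l', hsub, hlen, heq⟩ := ih hts θ hθ hcase
      refine ⟨a :: l', ?_, by simp [← hlen], ?_⟩
      · intro x hx
        rcases List.mem_cons.1 hx with rfl | hx
        · exact List.mem_cons_self
        · exact List.mem_cons_of_mem _ (hsub x hx)
      · simp only [List.map_cons, List.sum_cons]
        rw [add_assoc, heq]
    · have hpθpos : ((t.map R.s).sum) θ ∈ R.pos := R.mem_pos_of_not hpθΦ hcase
      have hpa : ((t.map R.s).sum) θ = a := by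
        by_contra hne
        have hsp := R.s_simple_pos haS hpθpos hne
        exact (R.neg_mem_pos_iff (R.pos_sub _ hsp)).1 hneg hsp
      have hconj := R.word_conj t htΦ θ (R.pos_sub θ hθ)
      rw [hpa] at hconj
      refine ⟨t, fun α hα => List.mem_cons_of_mem _ hα, by simp, ?_⟩
      have hps : (t.map R.s).sum + R.s θ = R.s a + (t.map R.s).sum := by
        rw [hconj]; simp only [add_assoc, neg_add_cancel, add_zero]
      rw [add_assoc, hps, ← add_assoc, R.s_mul_s haΦ, zero_add]

lemma lenW_zero_eq_one {w : AddAut X} (hw : w ∈ R.W) (h0 : R.lenW w = 0) : w = 0 := by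
  obtain ⟨l, hls, rfl⟩ := R.gen_W hw
  clear hw
  suffices H : ∀ n : ℕ, ∀ l : List X, l.length = n → (∀ α ∈ l, R.IsSimpleRoot α) →
      R.lenW ((l.map R.s).sum) = 0 → (l.map R.s).sum = 0 by
    exact H l.length l rfl hls h0
  clear hls h0 l
  intro n
  induction n using Nat.strong_induction_on with
  | _ n IH =>
  intro l hlen hls h0
  rcases List.eq_nil_or_concat l with rfl | ⟨t, θ, rfl⟩
  · simp
  · simp only [List.concat_eq_append] at hlen hls h0 ⊢
    have hθS : R.IsSimpleRoot θ := hls θ (by simp)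
    have hθp : θ ∈ R.pos := hθS.1
    have hθΦ : θ ∈ R.Φ := R.pos_sub θ hθp
    have hlΦ : ∀ α ∈ t ++ [θ], α ∈ R.Φ := fun α hα => R.pos_sub α (hls α hα).1
    have hwprod : ((t ++ [θ]).map R.s).sum = (t.map R.s).sum + R.s θ := by
      simp [List.map_append, List.sum_append]
    have hempty : R.pos.filter (fun δ => -(((t ++ [θ]).map R.s).sum δ) ∈ R.pos) = ∅ :=
      Finset.card_eq_zero.1 h0
    have hposall : ∀ γ ∈ R.pos, ((t ++ [θ]).map R.s).sum γ ∈ R.pos := by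
      intro γ hγ
      have hΦ : ((t ++ [θ]).map R.s).sum γ ∈ R.Φ :=
        R.W_mem_Φ (R.word_mem_W _ hlΦ) (R.pos_sub γ hγ)
      apply R.mem_pos_of_not hΦ
      intro hcon
      have hmem : γ ∈ R.pos.filter (fun δ => -(((t ++ [θ]).map R.s).sum δ) ∈ R.pos) :=
        Finset.mem_filter.2 ⟨hγ, hcon⟩
      rw [hempty] at hmem
      exact absurd hmem (Finset.notMem_empty γ)
    have hwθ : ((t ++ [θ]).map R.s).sum θ ∈ R.pos := hposall θ hθp
    have hneg : -(((t.map R.s).sum) θ) ∈ R.pos := by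
      have h1 : ((t ++ [θ]).map R.s).sum θ = -(((t.map R.s).sum) θ) := by
        rw [hwprod, AddAut.add_apply, R.s_self hθΦ, map_neg]
      rwa [h1] at hwθ
    obtain ⟨l', hsub, hlen', heq⟩ :=
      R.flip t (fun α hα => hls α (List.mem_append_left _ hα)) θ hθp hneg
    have hwl' : ((t ++ [θ]).map R.s).sum = (l'.map R.s).sum := by
      rw [hwprod, heq]
    have hlt : l'.length < n := by
      have ht : t.length + 1 = n := by simpa using hlen
      omega
    rw [hwl']
    apply IH l'.length hlt l' rfl
      (fun α hα => hls α (List.mem_append_left _ (hsub α hα)))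
    rw [← hwl']
    exact h0

end RootSystemData

/-- Let `λ ∈ X` and let `v ∈ W` be an element of minimal length `ℓ(v)` such that `vλ` is
dominant.  Then `v t_λ` is the unique element of minimal length in the coset
`W t_λ = {u t_λ : u ∈ W} ⊂ W_aff`; that is, `ℓ(v t_λ) ≤ ℓ(u t_λ)` for every `u ∈ W`, with
equality only for `u = v`. -/
theorem w_lambda_unique_min
    {X : Type*} [AddCommGroup X] [Module.Free ℤ X] [Module.Finite ℤ X] [DecidableEq X]
    (R : RootSystemData X) (lam : X) (v : AddAut X) (hv : v ∈ R.W)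
    (hdom : R.IsDominant (v lam))
    (hmin : ∀ u : AddAut X, u ∈ R.W → R.IsDominant (u lam) → R.lenW v ≤ R.lenW u) :
    ∀ u : AddAut X, u ∈ R.W →
      R.lenAff v lam ≤ R.lenAff u lam ∧ (R.lenAff u lam = R.lenAff v lam → u = v) := by
  classical
  intro u hu
  -- Step 1: if ⟨λ, α∨⟩ = 0 for a positive root α, then v α is positive.
  have F1 : ∀ α ∈ R.pos, R.coroot α lam = 0 → v α ∈ R.pos := by
    intro α hα h0
    by_contra hcon
    have hαΦ : α ∈ R.Φ := R.pos_sub α hα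
    have hneg : -(v α) ∈ R.pos := (R.neg_mem_pos_iff (R.W_mem_Φ hv hαΦ)).2 hcon
    have hvs : v + R.s α ∈ R.W := add_mem hv (R.s_mem_W hαΦ)
    have hfix : (v + R.s α) lam = v lam := by
      rw [AddAut.add_apply, R.s_apply α hαΦ lam, h0, zero_smul, sub_zero]
    have hdom' : R.IsDominant ((v + R.s α) lam) := by rw [hfix]; exact hdom
    have h1 := hmin (v + R.s α) hvs hdom'
    have h2 := R.lenW_mul_s_lt hv hα hneg
    omega
  -- Step 2: sign of v α is determined by the sign of ⟨λ, α∨⟩.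
  have hsign : ∀ α ∈ R.pos, (v α ∈ R.pos ↔ 0 ≤ R.coroot α lam) := by
    intro α hα
    have hαΦ : α ∈ R.Φ := R.pos_sub α hα
    have hvαΦ : v α ∈ R.Φ := R.W_mem_Φ hv hαΦ
    have hpair : R.coroot (v α) (v lam) = R.coroot α lam := R.W_coroot_apply hv hαΦ lam
    constructor
    · intro hp
      have := hdom (v α) hp
      rwa [hpair] at this
    · intro h0
      rcases lt_or_eq_of_le h0 with hlt | heq
      · by_contra hcon
        have hneg : -(v α) ∈ R.pos := (R.neg_mem_pos_iff hvαΦ).2 hcon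
        have := hdom (-(v α)) hneg
        rw [R.coroot_neg hvαΦ, hpair] at this
        omega
      · exact F1 α hα heq.symm
  -- Step 3: expansion of lenAff as a single sum.
  have expand : ∀ w : AddAut X, w ∈ R.W → R.lenAff w lam =
      ∑ α ∈ R.pos, (if w α ∈ R.pos then (R.coroot α lam).natAbs
        else (1 + R.coroot α lam).natAbs) := by
    intro w hw
    have h2 : R.pos.filter (fun α => -(w α) ∈ R.pos)
        = R.pos.filter (fun α => ¬ (w α ∈ R.pos)) := by
      ext δ
      simp only [Finset.mem_filter, and_congr_right_iff]
      intro hδ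
      exact R.neg_mem_pos_iff (R.W_mem_Φ hw (R.pos_sub δ hδ))
    unfold RootSystemData.lenAff
    rw [h2, Finset.sum_ite]
  -- Step 4: pointwise comparison.
  have hle : ∀ w : AddAut X, ∀ α ∈ R.pos,
      (if v α ∈ R.pos then (R.coroot α lam).natAbs else (1 + R.coroot α lam).natAbs)
        ≤ (if w α ∈ R.pos then (R.coroot α lam).natAbs
            else (1 + R.coroot α lam).natAbs) := by
    intro w α hα
    by_cases h0 : 0 ≤ R.coroot α lam
    · rw [if_pos ((hsign α hα).2 h0)]
      by_cases hw0 : w α ∈ R.pos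
      · rw [if_pos hw0]
      · rw [if_neg hw0]
        omega
    · rw [if_neg (fun hc => h0 ((hsign α hα).1 hc))]
      by_cases hw0 : w α ∈ R.pos
      · rw [if_pos hw0]
        omega
      · rw [if_neg hw0]
  constructor
  · rw [expand v hv, expand u hu]
    exact Finset.sum_le_sum (hle u)
  · intro hequ
    have hsum_eq : (∑ α ∈ R.pos, (if v α ∈ R.pos then (R.coroot α lam).natAbs
          else (1 + R.coroot α lam).natAbs))
        = ∑ α ∈ R.pos, (if u α ∈ R.pos then (R.coroot α lam).natAbs
          else (1 + R.coroot α lam).natAbs) := by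
      rw [← expand v hv, ← expand u hu, hequ]
    have hpt := (Finset.sum_eq_sum_iff_of_le (fun α hα => hle u α hα)).1 hsum_eq
    have husign : ∀ α ∈ R.pos, (u α ∈ R.pos ↔ 0 ≤ R.coroot α lam) := by
      intro α hα
      have h := hpt α hα
      constructor
      · intro hup
        by_contra h0
        rw [if_pos hup, if_neg (fun hc => h0 ((hsign α hα).1 hc))] at h
        omega
      · intro h0
        by_contra hup
        rw [if_neg hup, if_pos ((hsign α hα).2 h0)] at h
        omega
    -- Step 5: u + (-v) preserves positivity, hence is trivial.
    have hvinv : (-v) ∈ R.W := neg_mem hv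
    have hw' : u + (-v) ∈ R.W := add_mem hu hvinv
    have hwpos : ∀ γ ∈ R.pos, (u + (-v)) γ ∈ R.pos := by
      intro γ hγ
      have hγΦ : γ ∈ R.Φ := R.pos_sub γ hγ
      have hβΦ : (-v) γ ∈ R.Φ := R.W_mem_Φ hvinv hγΦ
      rw [AddAut.add_apply]
      by_cases hb : (-v) γ ∈ R.pos
      · have hv2 : v ((-v) γ) = γ := by simp
        have h3 : 0 ≤ R.coroot ((-v) γ) lam := (hsign _ hb).1 (by rw [hv2]; exact hγ)
        exact (husign _ hb).2 h3
      · have hb' : -((-v) γ) ∈ R.pos := (R.neg_mem_pos_iff hβΦ).2 hb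
        have hv3 : v (-((-v) γ)) = -γ := by rw [map_neg]; simp
        have hnot : ¬ (v (-((-v) γ)) ∈ R.pos) := by
          rw [hv3]
          exact fun hc => (R.neg_mem_pos_iff hγΦ).1 hc hγ
        have hn0 : ¬ (0 ≤ R.coroot (-((-v) γ)) lam) := fun hc => hnot ((hsign _ hb').2 hc)
        have hun : ¬ (u (-((-v) γ)) ∈ R.pos) := fun hc => hn0 ((husign _ hb').1 hc)
        rw [map_neg] at hun
        exact R.mem_pos_of_not (R.W_mem_Φ hu hβΦ) hun
    have hlen0 : R.lenW (u + (-v)) = 0 := by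
      unfold RootSystemData.lenW
      rw [Finset.card_eq_zero, Finset.filter_eq_empty_iff]
      intro γ hγ
      exact fun hc =>
        (R.neg_mem_pos_iff (R.W_mem_Φ hw' (R.pos_sub γ hγ))).1 hc (hwpos γ hγ)
    have h1 : u + (-v) = 0 := R.lenW_zero_eq_one hw' hlen0
    exact add_neg_eq_zero.1 h1
end

section
/- Let β ∈ Φ⁺ be a simple root, let s = s_β, let λ ∈ X satisfy ⟨λ, β∨⟩ < 0, and let v ∈ W satisfy vβ ∈ −Φ⁺. Then ℓ(v t_λ) = ℓ(v s · t_{sλ}) − 1, where both lengths are given by the Iwahori–Matsumoto formula. -/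
open scoped BigOperators

/-- Let `β ∈ Φ⁺` be a simple root (i.e. `s_β(Φ⁺) = (Φ⁺ ∖ {β}) ∪ {−β}`), let `s = s_β`, let
`λ ∈ X` satisfy `⟨λ, β∨⟩ < 0`, and let `v ∈ W` satisfy `vβ ∈ −Φ⁺`.  Then
`ℓ(v t_λ) = ℓ(v s · t_{sλ}) − 1`, where both lengths are given by the Iwahori–Matsumoto
formula. -/
theorem length_step_simple_reflection
    {X : Type*} [AddCommGroup X] [Module.Free ℤ X] [Module.Finite ℤ X] [DecidableEq X]
    (R : RootSystemData X) (β : X) (hβ : β ∈ R.pos)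
    (hsimple : R.pos.image (fun α => R.s β α) = insert (-β) (R.pos.erase β))
    (lam : X) (hlam : R.coroot β lam < 0)
    (v : AddAut X) (hv : v ∈ R.W) (hvβ : -(v β) ∈ R.pos) :
    (R.lenAff v lam : ℤ) = (R.lenAff (v + R.s β) (R.s β lam) : ℤ) - 1 := by
  classical
  have hβΦ : β ∈ R.Φ := ((R.pos_def β).mp hβ).1
  have hfβ : 0 < R.f β := ((R.pos_def β).mp hβ).2
  -- s is an involution
  have hss : ∀ x : X, R.s β (R.s β x) = x := by
    intro x
    rw [R.s_apply β hβΦ, R.s_apply β hβΦ, map_sub, map_zsmul, R.pairing_self β hβΦ]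
    have h : R.coroot β x - R.coroot β x • (2:ℤ) = -(R.coroot β x) := by
      simp [smul_eq_mul]; ring
    rw [h, neg_smul]
    abel
  have hsinv : ∀ x : X, (-(R.s β)) x = R.s β x := by
    intro x
    have := hss x
    calc (-(R.s β)) x = (-(R.s β)) (R.s β (R.s β x)) := by rw [this]
      _ = R.s β x := by simp
  -- coroot equivariance, specialized form
  have flip : ∀ γ ∈ R.Φ, ∀ x : X, R.coroot (R.s β γ) x = R.coroot γ (R.s β x) := by
    intro γ hγ x
    rw [R.coroot_equivariant β hβΦ γ hγ x, hsinv]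
  have coroot_s : ∀ α ∈ R.Φ, R.coroot α (R.s β lam) = R.coroot (R.s β α) lam := by
    intro α hα
    exact (flip α hα lam).symm
  have hsββ : R.s β β = -β := by
    rw [R.s_apply β hβΦ, R.pairing_self β hβΦ, two_zsmul]
    abel
  have hcnegβ : R.coroot (-β) lam = -(R.coroot β lam) := by
    rw [← hsββ, flip β hβΦ lam, R.s_apply β hβΦ, map_sub, map_zsmul,
      R.pairing_self β hβΦ]
    simp [smul_eq_mul]; ring
  -- v β ∉ pos
  have hvβΦ : -(v β) ∈ R.Φ := ((R.pos_def _).mp hvβ).1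
  have hvβnot : v β ∉ R.pos := by
    intro h
    have h1 : 0 < R.f (v β) := ((R.pos_def _).mp h).2
    have h2 : 0 < R.f (-(v β)) := ((R.pos_def _).mp hvβ).2
    rw [map_neg] at h2
    linarith
  have hnegβnot : -β ∉ R.pos := by
    intro h
    have h2 : 0 < R.f (-β) := ((R.pos_def _).mp h).2
    rw [map_neg] at h2
    linarith
  -- the common term function
  set G : X → ℕ := fun γ =>
    (if v γ ∈ R.pos then (R.coroot γ lam).natAbs else 0)
      + (if -(v γ) ∈ R.pos then (1 + R.coroot γ lam).natAbs else 0) with hG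
  have hlen1 : R.lenAff v lam = ∑ α ∈ R.pos, G α := by
    rw [RootSystemData.lenAff, Finset.sum_filter, Finset.sum_filter,
      ← Finset.sum_add_distrib]
  have hlen2 : R.lenAff (v + R.s β) (R.s β lam) = ∑ α ∈ R.pos, G (R.s β α) := by
    rw [RootSystemData.lenAff, Finset.sum_filter, Finset.sum_filter,
      ← Finset.sum_add_distrib]
    refine Finset.sum_congr rfl (fun α hα => ?_)
    have hαΦ : α ∈ R.Φ := ((R.pos_def α).mp hα).1
    rw [hG]
    simp only [AddAut.mul_apply, coroot_s α hαΦ]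
  have hinj : ∀ x ∈ R.pos, ∀ y ∈ R.pos, R.s β x = R.s β y → x = y := by
    intro x _ y _ h
    have := congrArg (R.s β) h
    rwa [hss, hss] at this
  have himage : ∑ α ∈ R.pos, G (R.s β α)
      = ∑ γ ∈ insert (-β) (R.pos.erase β), G γ := by
    rw [← Finset.sum_image hinj, hsimple]
  have hnotmem : -β ∉ R.pos.erase β := fun h => hnegβnot (Finset.mem_erase.mp h).2
  have hsum2 : ∑ γ ∈ insert (-β) (R.pos.erase β), G γ
      = G (-β) + ∑ γ ∈ R.pos.erase β, G γ := Finset.sum_insert hnotmem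
  have hsum1 : ∑ α ∈ R.pos, G α = G β + ∑ γ ∈ R.pos.erase β, G γ :=
    (Finset.add_sum_erase R.pos G hβ).symm
  -- key values
  have hGβ : G β = (1 + R.coroot β lam).natAbs := by
    rw [hG]
    simp [hvβnot, hvβ]
  have hGnegβ : G (-β) = (R.coroot β lam).natAbs := by
    rw [hG]
    simp only [map_neg, neg_neg, hcnegβ]
    rw [if_pos hvβ, if_neg hvβnot]
    simp [Int.natAbs_neg]
  have hkey : G (-β) = G β + 1 := by
    rw [hGβ, hGnegβ]
    omega
  have : R.lenAff (v + R.s β) (R.s β lam) = R.lenAff v lam + 1 := by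
    rw [hlen2, himage, hsum2, hlen1, hsum1, hkey]
    omega
  rw [this]
  push_cast
  ring
end
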